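/- arXiv:0912.2051 — 2 statements merged into one kernel-verified Lean document; each statement's English description precedes it below -/
import Mathlib

section
/- Let D be a finite nonempty set of positive integers, p a prime, and n a positive integer. Suppose (u_d)_{d∈D} are nonnegative integers (not necessarily bounded by p^n − 1) with Σ_{d∈D} u_d·d ≡ 0 (mod p^n − 1) and Σ_{d∈D} u_d·d > 0. Then Σ_{d∈D} s_p(u_d) ≥ s_{D,p}(n), where s_{D,p}(n) is the minimum of Σ_{d∈D} s_p(v_d) over all tuples (v_d)_{d∈D} with 0 ≤ v_d ≤ p^n − 1, Σ v_d·d ≡ 0 (mod p^n − 1) and Σ v_d·d > 0. -/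
/-- `sp p n` is the sum of the base-`p` digits of `n`. -/
def sp (p n : ℕ) : ℕ := (Nat.digits p n).sum

/-- `sD p n D` is `s_{D,p}(n)`: the minimum of `∑_{d∈D} s_p(u_d)` over tuples
`(u_d)_{d∈D}` with `0 ≤ u_d ≤ p^n − 1`, `∑ u_d·d ≡ 0 (mod p^n − 1)` and `∑ u_d·d > 0`. -/
noncomputable def sD (p n : ℕ) (D : Finset ℕ) : ℕ :=
  sInf {s : ℕ | ∃ u : ℕ → ℕ, (∀ d ∈ D, u d ≤ p ^ n - 1) ∧
    (p ^ n - 1) ∣ (∑ d ∈ D, u d * d) ∧ 0 < ∑ d ∈ D, u d * d ∧ s = ∑ d ∈ D, sp p (u d)}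

lemma sp_rec {p : ℕ} (hp : 1 < p) (m : ℕ) : sp p m = m % p + sp p (m / p) := by
  rcases Nat.eq_zero_or_pos m with rfl | hm
  · simp [sp]
  · rw [sp, Nat.digits_def' hp hm]
    simp [sp]

lemma sp_one {p : ℕ} (hp : 1 < p) : sp p 1 = 1 := by
  rw [sp_rec hp 1, Nat.mod_eq_of_lt hp, Nat.div_eq_of_lt hp]
  simp [sp]

lemma sp_add_le {p : ℕ} (hp : 1 < p) (a b : ℕ) : sp p (a + b) ≤ sp p a + sp p b := by
  suffices h : ∀ N a b : ℕ, a + b ≤ N → sp p (a + b) ≤ sp p a + sp p b from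
    h (a + b) a b le_rfl
  intro N
  induction N with
  | zero =>
    intro a b hab
    have ha : a = 0 := by omega
    have hb : b = 0 := by omega
    subst ha; subst hb; simp
  | succ N ih =>
    intro a b hab
    rcases Nat.eq_zero_or_pos (a + b) with h0 | hpos
    · have ha : a = 0 := by omega
      have hb : b = 0 := by omega
      subst ha; subst hb; simp
    have hp0 : 0 < p := by omega
    have hma : p * (a / p) + a % p = a := Nat.div_add_mod a p
    have hmb : p * (b / p) + b % p = b := Nat.div_add_mod b p
    have h2a : 2 * (a / p) ≤ p * (a / p) := Nat.mul_le_mul_right _ (by omega)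
    have h2b : 2 * (b / p) ≤ p * (b / p) := Nat.mul_le_mul_right _ (by omega)
    have hca : a % p < p := Nat.mod_lt a hp0
    have hcb : b % p < p := Nat.mod_lt b hp0
    rcases lt_or_ge (a % p + b % p) p with hlt | hge
    · -- no carry
      have hmod : (a + b) % p = a % p + b % p := by
        rw [Nat.add_mod, Nat.mod_eq_of_lt hlt]
      have hdiv : (a + b) / p = a / p + b / p := by
        rw [Nat.add_div hp0]
        simp [Nat.not_le.mpr hlt]
      have hsmall : a / p + b / p ≤ N := by omega
      have := ih (a / p) (b / p) hsmall
      rw [sp_rec hp (a + b), sp_rec hp a, sp_rec hp b, hdiv, hmod]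
      omega
    · -- carry
      have hmod : (a + b) % p = a % p + b % p - p := by
        rw [Nat.add_mod, Nat.mod_eq_sub_mod hge, Nat.mod_eq_of_lt (by omega)]
      have hdiv : (a + b) / p = a / p + b / p + 1 := by
        rw [Nat.add_div hp0]
        simp [hge]
      have hsmall : a / p + b / p + 1 ≤ N := by omega
      have i1 : sp p (a / p + (b / p + 1)) ≤ sp p (a / p) + sp p (b / p + 1) :=
        ih _ _ (by omega)
      have i2 : sp p (b / p + 1) ≤ sp p (b / p) + sp p 1 := ih _ _ (by omega)
      rw [sp_one hp] at i2
      rw [sp_rec hp (a + b), sp_rec hp a, sp_rec hp b, hdiv, hmod]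
      have he : a / p + b / p + 1 = a / p + (b / p + 1) := by ring
      rw [he]
      omega

/-- digit-sum of a concatenation: `sp (q * p^k + r) = sp q + sp r` for `r < p^k`. -/
lemma sp_mul_pow_add {p : ℕ} (hp : 1 < p) :
    ∀ k q r : ℕ, r < p ^ k → sp p (q * p ^ k + r) = sp p q + sp p r := by
  intro k
  induction k with
  | zero =>
    intro q r hr
    rw [pow_zero] at hr
    have : r = 0 := by omega
    subst this
    simp [sp]
  | succ k ihk =>
    intro q r hr
    have hp0 : 0 < p := by omega
    have hsplit : q * p ^ (k + 1) + r = p * (q * p ^ k) + r := by ring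
    have e1 : (q * p ^ (k + 1) + r) % p = r % p := by
      rw [hsplit, Nat.mul_add_mod]
    have e2 : (q * p ^ (k + 1) + r) / p = q * p ^ k + r / p := by
      rw [hsplit, Nat.mul_add_div hp0]
    have hrp : r / p < p ^ k := by
      rw [Nat.div_lt_iff_lt_mul hp0, ← pow_succ]; exact hr
    rw [sp_rec hp (q * p ^ (k + 1) + r), e1, e2, ihk q (r / p) hrp, sp_rec hp r]
    omega

lemma sp_fold {p n : ℕ} (hp : 1 < p) (hK : 1 < p ^ n) :
    ∀ m : ℕ, ∃ m', (0 < m → 0 < m') ∧ m' ≤ p ^ n - 1 ∧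
      m' % (p ^ n - 1) = m % (p ^ n - 1) ∧ sp p m' ≤ sp p m := by
  intro m
  induction m using Nat.strong_induction_on with
  | _ m ih =>
    rcases lt_or_ge m (p ^ n) with hm | hm
    · exact ⟨m, fun h => h, by omega, rfl, le_rfl⟩
    · have hq : 0 < m / p ^ n := Nat.div_pos hm (by omega)
      have hmd : p ^ n * (m / p ^ n) + m % p ^ n = m := Nat.div_add_mod m (p ^ n)
      have hr : m % p ^ n < p ^ n := Nat.mod_lt m (by omega)
      have h2q : 2 * (m / p ^ n) ≤ p ^ n * (m / p ^ n) := Nat.mul_le_mul_right _ (by omega)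
      have hlt : m / p ^ n + m % p ^ n < m := by omega
      obtain ⟨m', h1, h2, h3, h4⟩ := ih (m / p ^ n + m % p ^ n) hlt
      refine ⟨m', fun _ => h1 (Nat.lt_of_lt_of_le hq (Nat.le_add_right _ _)), h2, ?_, ?_⟩
      · rw [h3]
        have hqK : m / p ^ n ≤ p ^ n * (m / p ^ n) := Nat.le_mul_of_pos_left _ (by omega)
        have hid : (p ^ n - 1) * (m / p ^ n) + (m / p ^ n + m % p ^ n) = m := by
          rw [Nat.sub_one_mul]
          omega
        conv_rhs => rw [← hid, Nat.mul_add_mod]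
      · calc sp p m' ≤ sp p (m / p ^ n + m % p ^ n) := h4
          _ ≤ sp p (m / p ^ n) + sp p (m % p ^ n) := sp_add_le hp _ _
          _ = sp p m := by
            conv_rhs => rw [← hmd, show p ^ n * (m / p ^ n) + m % p ^ n
              = (m / p ^ n) * p ^ n + m % p ^ n by ring]
            exact (sp_mul_pow_add hp n (m / p ^ n) (m % p ^ n) hr).symm

theorem stmt_6 (p : ℕ) (hp : p.Prime) (n : ℕ) (hn : 0 < n)
    (D : Finset ℕ) (hD : D.Nonempty) (hDpos : ∀ d ∈ D, 0 < d)
    (u : ℕ → ℕ) (hdvd : (p ^ n - 1) ∣ (∑ d ∈ D, u d * d)) (hpos : 0 < ∑ d ∈ D, u d * d) :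
    sD p n D ≤ ∑ d ∈ D, sp p (u d) := by
  have hp1 : 1 < p := hp.one_lt
  have hK : 1 < p ^ n := Nat.one_lt_pow (by omega) hp1
  choose f hf1 hf2 hf3 hf4 using sp_fold hp1 hK
  set v : ℕ → ℕ := fun d => f (u d) with hv
  have hmem : (∑ d ∈ D, sp p (v d)) ∈ {s : ℕ | ∃ u : ℕ → ℕ,
      (∀ d ∈ D, u d ≤ p ^ n - 1) ∧ (p ^ n - 1) ∣ (∑ d ∈ D, u d * d) ∧
      0 < ∑ d ∈ D, u d * d ∧ s = ∑ d ∈ D, sp p (u d)} := by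
    refine ⟨v, fun d _ => hf2 (u d), ?_, ?_, rfl⟩
    · -- divisibility: sums are congruent mod p^n - 1
      have hcong : (∑ d ∈ D, v d * d) % (p ^ n - 1) = (∑ d ∈ D, u d * d) % (p ^ n - 1) := by
        conv_lhs => rw [Finset.sum_nat_mod]
        conv_rhs => rw [Finset.sum_nat_mod]
        congr 1
        apply Finset.sum_congr rfl
        intro d _
        exact Nat.ModEq.mul_right d (hf3 (u d))
      rw [← Nat.modEq_zero_iff_dvd] at hdvd ⊢
      exact hcong.trans hdvd
    · -- positivity
      have hex : ∃ d ∈ D, 0 < u d * d := by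
        by_contra h
        push_neg at h
        have : ∑ d ∈ D, u d * d = 0 := Finset.sum_eq_zero fun d hd => by
          have := h d hd; omega
        omega
      obtain ⟨d, hd, hud⟩ := hex
      have hu : 0 < u d := by
        rcases Nat.eq_zero_or_pos (u d) with h | h
        · simp [h] at hud
        · exact h
      exact Finset.sum_pos' (fun i _ => Nat.zero_le _)
        ⟨d, hd, Nat.mul_pos (hf1 _ hu) (hDpos d hd)⟩
  calc sD p n D ≤ ∑ d ∈ D, sp p (v d) := Nat.sInf_le hmem
    _ ≤ ∑ d ∈ D, sp p (u d) := Finset.sum_le_sum fun d _ => hf4 (u d)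
end

section
/- Let p be an odd prime, n ≥ 1, and D = {1 ≤ i ≤ 2p^n − 2 : gcd(i,p) = 1}. The elements of D whose base-p digit sum equals n(p−1) are exactly the integers d_i = 2p^n − p^i − 1 for 0 ≤ i ≤ n. -/
lemma sp_step {p : ℕ} (hp : 2 ≤ p) (q r : ℕ) (hr : r < p) :
    sp p (p * q + r) = r + sp p q := by
  rcases Nat.eq_zero_or_pos (p * q + r) with h | h
  · have hq : q = 0 := by
      by_contra h'
      have : 1 ≤ q := Nat.one_le_iff_ne_zero.mpr h'
      have := Nat.mul_le_mul_left p this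
      omega
    simp [hq] at h
    simp [hq, h, sp]
  · unfold sp
    rw [Nat.digits_def' (by omega : 1 < p) h]
    have h1 : (p * q + r) % p = r := by
      rw [Nat.mul_add_mod, Nat.mod_eq_of_lt hr]
    have h2 : (p * q + r) / p = q := by
      rw [Nat.mul_add_div (by omega), Nat.div_eq_of_lt hr, Nat.add_zero]
    rw [h1, h2]; simp

lemma sp_zero (p : ℕ) : sp p 0 = 0 := by simp [sp]

lemma sp_small {p : ℕ} (hp : 2 ≤ p) {a : ℕ} (ha : a < p) : sp p a = a := by
  have := sp_step hp 0 a ha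
  simpa [sp_zero] using this

lemma sp_eq_zero {p : ℕ} (hp : 2 ≤ p) : ∀ r, sp p r = 0 → r = 0 := by
  intro r
  induction r using Nat.strong_induction_on with
  | _ r IH =>
    intro h
    rcases Nat.eq_zero_or_pos r with h0 | h0
    · exact h0
    · have hr : r = p * (r / p) + r % p := by rw [Nat.div_add_mod]
      have hm : r % p < p := Nat.mod_lt _ (by omega)
      have hs : sp p r = r % p + sp p (r / p) := by
        conv_lhs => rw [hr]
        exact sp_step hp _ _ hm
      have hdiv : r / p < r := Nat.div_lt_self h0 (by omega)
      have hz : r / p = 0 := IH (r / p) hdiv (by omega)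
      have hlt : r < p := (Nat.div_eq_zero_iff.mp hz).resolve_left (by omega)
      rw [sp_small hp hlt] at h
      exact h

lemma sp_eq_one {p : ℕ} (hp : 2 ≤ p) : ∀ r, sp p r = 1 → ∃ i, r = p ^ i := by
  intro r
  induction r using Nat.strong_induction_on with
  | _ r IH =>
    intro h
    rcases Nat.eq_zero_or_pos r with h0 | h0
    · simp [h0, sp_zero] at h
    · have hr : r = p * (r / p) + r % p := by rw [Nat.div_add_mod]
      have hm : r % p < p := Nat.mod_lt _ (by omega)
      have hs : sp p r = r % p + sp p (r / p) := by
        conv_lhs => rw [hr]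
        exact sp_step hp _ _ hm
      rcases Nat.lt_or_ge (r % p) 1 with hc | hc
      · have hdiv : r / p < r := Nat.div_lt_self h0 (by omega)
        obtain ⟨j, hj⟩ := IH (r / p) hdiv (by omega)
        refine ⟨j + 1, ?_⟩
        rw [pow_succ, mul_comm (p ^ j) p, ← hj]
        omega
      · have h1 : r % p = 1 := by omega
        have h2 : sp p (r / p) = 0 := by omega
        have hz := sp_eq_zero hp _ h2
        rw [hz, Nat.mul_zero, Nat.zero_add, h1] at hr
        exact ⟨0, by rw [pow_zero, hr]⟩

lemma sp_compl {p : ℕ} (hp : 2 ≤ p) :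
    ∀ N m, m < p ^ N → sp p m + sp p (p ^ N - 1 - m) = N * (p - 1) := by
  intro N
  induction N with
  | zero =>
    intro m hm
    rw [pow_zero] at hm
    interval_cases m
    simp [sp_zero]
  | succ N IH =>
    intro m hm
    have hA : 0 < p ^ N := Nat.pow_pos (by omega)
    have hPA : p ^ (N + 1) = p * p ^ N := by ring
    have hab : p * (m / p) + m % p = m := Nat.div_add_mod m p
    have hbp : m % p < p := Nat.mod_lt _ (by omega)
    have haA : m / p < p ^ N := by
      rw [Nat.div_lt_iff_lt_mul (by omega : 0 < p), mul_comm]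
      omega
    have key : p ^ (N + 1) - 1 - m = p * (p ^ N - 1 - m / p) + (p - 1 - m % p) := by
      have h1 : p * (p ^ N - 1 - m / p) = p * p ^ N - p * 1 - p * (m / p) := by
        rw [Nat.mul_sub, Nat.mul_sub]
      have h2 : p * (m / p + 1) ≤ p * p ^ N := Nat.mul_le_mul_left p haA
      have h3 : p * (m / p + 1) = p * (m / p) + p := by ring
      rw [hPA]
      omega
    have e1 : sp p m = m % p + sp p (m / p) := by
      conv_lhs => rw [← hab]
      exact sp_step hp _ _ hbp
    have e2 : sp p (p ^ (N + 1) - 1 - m) = (p - 1 - m % p) + sp p (p ^ N - 1 - m / p) := by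
      rw [key]; exact sp_step hp _ _ (by omega)
    have e3 := IH (m / p) haA
    have e4 : (N + 1) * (p - 1) = N * (p - 1) + (p - 1) := by ring
    omega

lemma sp_split {p : ℕ} (hp : 2 ≤ p) :
    ∀ k q r, r < p ^ k → sp p (q * p ^ k + r) = sp p q + sp p r := by
  intro k
  induction k with
  | zero =>
    intro q r hr
    rw [pow_zero] at hr
    interval_cases r
    simp [sp_zero]
  | succ k IH =>
    intro q r hr
    have hb : r % p < p := Nat.mod_lt _ (by omega)
    have ha : r / p < p ^ k := by
      rw [Nat.div_lt_iff_lt_mul (by omega : 0 < p), mul_comm]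
      have : p ^ (k + 1) = p * p ^ k := by ring
      omega
    have key : q * p ^ (k + 1) + r = p * (q * p ^ k + r / p) + r % p := by
      have h2 : p * (q * p ^ k + r / p) + r % p
          = q * p ^ (k + 1) + (p * (r / p) + r % p) := by ring
      rw [h2, Nat.div_add_mod]
    have e1 : sp p r = r % p + sp p (r / p) := by
      conv_lhs => rw [← Nat.div_add_mod r p]
      exact sp_step hp _ _ hb
    rw [key, sp_step hp _ _ hb, IH q (r / p) ha]
    omega

/-- For `p` an odd prime and `D = {1 ≤ i ≤ 2p^n − 2 : gcd(i,p) = 1}`, the elements of `D`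
with base-`p` digit sum `n(p−1)` are exactly the `d_i = 2p^n − p^i − 1`, `0 ≤ i ≤ n`. -/
theorem stmt_9 (p : ℕ) (hp : p.Prime) (hodd : Odd p) (n : ℕ) (hn : 0 < n)
    (D : Finset ℕ) (hD : D = (Finset.Icc 1 (2 * p ^ n - 2)).filter fun i => Nat.gcd i p = 1)
    (d : ℕ) (hd : d ∈ D) :
    sp p d = n * (p - 1) ↔ ∃ i ≤ n, d = 2 * p ^ n - p ^ i - 1 := by
  have hp2 : 2 ≤ p := hp.two_le
  have hp3 : 3 ≤ p := by
    rcases hodd with ⟨k, hk⟩; omega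
  subst hD
  simp only [Finset.mem_filter, Finset.mem_Icc] at hd
  obtain ⟨⟨h1, h2⟩, -⟩ := hd
  have hA0 : 0 < p ^ n := Nat.pow_pos (by omega)
  have hpA : p ≤ p ^ n := Nat.le_self_pow (by omega) p
  have hPA : p ^ (n + 1) = p * p ^ n := by ring
  have h3A : 3 * p ^ n ≤ p * p ^ n := Nat.mul_le_mul_right _ hp3
  have hsubm : (p - 2) * p ^ n = p * p ^ n - 2 * p ^ n := by
    rw [Nat.sub_mul]
  have hdP : d < p ^ (n + 1) := by omega
  constructor
  · intro hsp
    have hcompl := sp_compl hp2 (n + 1) d hdP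
    set c := p ^ (n + 1) - 1 - d with hc
    have e4 : (n + 1) * (p - 1) = n * (p - 1) + (p - 1) := by ring
    have hspc : sp p c = p - 1 := by omega
    have hcb : c < p * p ^ n := by omega
    have hcl : (p - 2) * p ^ n + 1 ≤ c := by omega
    have hqr : p ^ n * (c / p ^ n) + c % p ^ n = c := Nat.div_add_mod c (p ^ n)
    have hrA : c % p ^ n < p ^ n := Nat.mod_lt _ hA0
    have hq : c / p ^ n < p := by
      rw [Nat.div_lt_iff_lt_mul hA0]
      have : p ^ n * p = p * p ^ n := mul_comm _ _
      omega
    have hsplit : sp p c = sp p (c / p ^ n) + sp p (c % p ^ n) := by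
      conv_lhs => rw [← hqr, mul_comm (p ^ n)]
      exact sp_split hp2 n _ _ hrA
    rw [sp_small hp2 hq] at hsplit
    have hql : p - 2 ≤ c / p ^ n := by
      by_contra hcon
      push_neg at hcon
      have h4 : c / p ^ n + 1 ≤ p - 2 := by omega
      have h5 : (c / p ^ n + 1) * p ^ n ≤ (p - 2) * p ^ n := Nat.mul_le_mul_right _ h4
      have h6 : (c / p ^ n + 1) * p ^ n = p ^ n * (c / p ^ n) + p ^ n := by ring
      omega
    rcases (by omega : c / p ^ n = p - 2 ∨ c / p ^ n = p - 1) with hcase | hcase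
    · have hr1 : sp p (c % p ^ n) = 1 := by omega
      obtain ⟨i, hieq⟩ := sp_eq_one hp2 _ hr1
      have hiltn : i < n := by
        by_contra hcon
        push_neg at hcon
        have := Nat.pow_le_pow_right (by omega : 1 ≤ p) hcon
        omega
      refine ⟨i, le_of_lt hiltn, ?_⟩
      have h8 : p ^ n * (c / p ^ n) = p ^ n * (p - 2) := by rw [hcase]
      have h9 : p ^ n * (p - 2) = (p - 2) * p ^ n := by ring
      have hpi : p ^ i ≤ p ^ n := Nat.pow_le_pow_right (by omega) (le_of_lt hiltn)
      omega
    · have hr0 : sp p (c % p ^ n) = 0 := by omega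
      have hr0' := sp_eq_zero hp2 _ hr0
      refine ⟨n, le_refl n, ?_⟩
      have h8 : p ^ n * (c / p ^ n) = p ^ n * (p - 1) := by rw [hcase]
      have h9 : p ^ n * (p - 1) = p * p ^ n - 1 * p ^ n := by rw [mul_comm, Nat.sub_mul]
      omega
  · rintro ⟨i, hi, hdeq⟩
    have hpi : p ^ i ≤ p ^ n := Nat.pow_le_pow_right (by omega) hi
    have hcompl := sp_compl hp2 (n + 1) d hdP
    have hce : p ^ (n + 1) - 1 - d = (p - 2) * p ^ n + p ^ i := by omega
    have hni : p ^ n = p ^ (n - i) * p ^ i := by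
      rw [← pow_add]
      congr 1
      omega
    have hcc : (p - 2) * p ^ n + p ^ i = ((p - 2) * p ^ (n - i) + 1) * p ^ i + 0 := by
      rw [hni]; ring
    have hspc : sp p ((p - 2) * p ^ n + p ^ i) = p - 1 := by
      rw [hcc, sp_split hp2 i _ 0 (Nat.pow_pos (by omega)), sp_zero, Nat.add_zero]
      rcases Nat.eq_or_lt_of_le hi with he | hlt
      · rw [he, Nat.sub_self, pow_zero, Nat.mul_one,
          sp_small hp2 (by omega : p - 2 + 1 < p)]
        omega
      · have h1n : 1 ≤ n - i := by omega
        have hle : p ≤ p ^ (n - i) := Nat.le_self_pow (by omega) p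
        have hspl := sp_split hp2 (n - i) (p - 2) 1 (by omega)
        rw [hspl, sp_small hp2 (by omega : (1 : ℕ) < p),
          sp_small hp2 (by omega : p - 2 < p)]
        omega
    rw [hce, hspc] at hcompl
    have e4 : (n + 1) * (p - 1) = n * (p - 1) + (p - 1) := by ring
    omega
end
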